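/- For the gamma characteristic exponent ψ_γ(x) = α log(κ/(κ-ix)) with κ, α > 0 and β > 0, the identity ∫_s^t ψ_γ((1 - e^{-β(t-u)})x/β) du = (t-s)ψ_γ(x/β) + (α/β)(Li₂(v) - Li₂(v e^{-β(t-s)})) holds, where v = -ix/(κβ - ix). -/

import Mathlib

open MeasureTheory Complex

/-- The dilogarithm `Li₂(z) = ∑_{n≥1} zⁿ/n²`. -/
noncomputable def dilog (z : ℂ) : ℂ := ∑' n : ℕ, z ^ (n + 1) / ((n : ℂ) + 1) ^ 2

/-- The characteristic exponent `ψ_γ(x) = α log(κ/(κ - ix))` of a gamma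
distribution with parameters `(κ, α)` (principal branch of the logarithm). -/
noncomputable def gammaExponent (κ α : ℝ) (x : ℝ) : ℂ :=
  α * Complex.log (κ / (κ - x * Complex.I))

lemma aux_hasSum {z : ℂ} (hz : ‖z‖ < 1) :
    HasSum (fun n : ℕ => z ^ (n+1) / ((n:ℂ)+1)) (-Complex.log (1 - z)) := by
  have H := Complex.hasSum_taylorSeries_neg_log hz
  have H' := (hasSum_nat_add_iff' 1).mpr H
  simpa using H'

lemma aux_summable {z : ℂ} (hz : ‖z‖ < 1) : Summable (fun n : ℕ => z ^ (n+1) / ((n:ℂ)+1)^2) := by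
  refine Summable.of_norm_bounded
    ((summable_geometric_of_lt_one (norm_nonneg z) hz).mul_left ‖z‖) ?_
  intro n
  rw [norm_div, norm_pow]
  have h1 : (1:ℝ) ≤ ‖((n:ℂ)+1)^2‖ := by
    rw [norm_pow]
    have : (1:ℝ) ≤ ‖(n:ℂ)+1‖ := by
      rw [show ((n:ℂ)+1) = ((n+1:ℕ):ℂ) by push_cast; ring, Complex.norm_natCast]
      exact_mod_cast Nat.one_le_iff_ne_zero.mpr (Nat.succ_ne_zero n)
    nlinarith [norm_nonneg ((n:ℂ)+1)]
  calc ‖z‖^(n+1) / ‖((n:ℂ)+1)^2‖ ≤ ‖z‖^(n+1) / 1 := by gcongr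
    _ = ‖z‖ * ‖z‖^n := by rw [div_one, pow_succ]; ring

lemma aux_norm_v (κ β x : ℝ) (hκ : 0 < κ) (hβ : 0 < β) :
    ‖(-(↑x * Complex.I) / (↑κ * ↑β - ↑x * Complex.I) : ℂ)‖ < 1 := by
  set D : ℂ := ↑κ*↑β - ↑x*Complex.I with hDdef
  have hDre : D.re = κ*β := by simp [hDdef]
  have hD0 : D ≠ 0 := by
    intro h; rw [h] at hDre; simp at hDre
    rcases hDre with h|h <;> linarith
  rw [norm_div, norm_neg]
  refine div_lt_one (norm_pos_iff.mpr hD0) |>.mpr ?_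
  have h1 : ‖(↑x*Complex.I : ℂ)‖^2 < ‖D‖^2 := by
    rw [Complex.sq_norm, Complex.sq_norm,
      Complex.normSq_apply, Complex.normSq_apply]
    simp only [hDdef, Complex.mul_re, Complex.mul_im, Complex.sub_re, Complex.sub_im,
      Complex.ofReal_re, Complex.ofReal_im, Complex.I_re, Complex.I_im]
    nlinarith [mul_pos (mul_pos hκ hβ) (mul_pos hκ hβ)]
  exact lt_of_pow_lt_pow_left₀ 2 (norm_nonneg D) h1

lemma aux_re_pos {v : ℂ} (hv1 : ‖v‖ < 1) (w : ℝ) (h0 : 0 ≤ w) (h1 : w ≤ 1) :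
    0 < (1 - ↑w*v).re := by
  have h1' : |v.re| ≤ ‖v‖ := Complex.abs_re_le_norm v
  have h2 : (1 - (↑w:ℂ)*v).re = 1 - w*v.re := by simp [Complex.sub_re, Complex.mul_re]
  rw [h2]
  rcases abs_le.mp h1' with ⟨hl, hr⟩
  nlinarith [norm_nonneg v]
lemma aux_key (κ α β : ℝ) (hκ : 0 < κ) (hβ : 0 < β) (x w : ℝ) (hw0 : 0 < w) (hw1 : w ≤ 1) :
    gammaExponent κ α ((1-w)*x/β)
      = gammaExponent κ α (x/β)
        - ↑α * Complex.log (1 - ↑w * (-(↑x*Complex.I)/(↑κ*↑β - ↑x*Complex.I))) := by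
  set D : ℂ := ↑κ*↑β - ↑x*Complex.I with hDdef
  set v : ℂ := -(↑x*Complex.I)/D with hvdef
  have hDre : D.re = κ*β := by simp [hDdef]
  have hD0 : D ≠ 0 := by
    intro h; rw [h] at hDre; simp at hDre
    rcases hDre with h|h <;> linarith
  have hv1 : ‖v‖ < 1 := by
    rw [hvdef, norm_div, norm_neg]
    refine div_lt_one (norm_pos_iff.mpr hD0) |>.mpr ?_
    have h1 : ‖(↑x*Complex.I : ℂ)‖^2 < ‖D‖^2 := by
      rw [Complex.sq_norm, Complex.sq_norm,
        Complex.normSq_apply, Complex.normSq_apply]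
      simp only [hDdef, Complex.mul_re, Complex.mul_im, Complex.sub_re, Complex.sub_im,
        Complex.ofReal_re, Complex.ofReal_im, Complex.I_re, Complex.I_im]
      nlinarith [mul_pos (mul_pos hκ hβ) (mul_pos hκ hβ)]
    exact lt_of_pow_lt_pow_left₀ 2 (norm_nonneg D) h1
  have hvre : 0 < (1 - ↑w*v).re := by
    have h1 : |v.re| ≤ ‖v‖ := Complex.abs_re_le_norm v
    have h2 : (1 - (↑w:ℂ)*v).re = 1 - w * v.re := by
      simp [Complex.sub_re, Complex.mul_re]
    rw [h2]
    rcases abs_le.mp h1 with ⟨hl, hr⟩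
    nlinarith
  have h1wv : (1 - ↑w*v) ≠ 0 := by
    intro h; rw [h] at hvre; simp at hvre
  set E : ℂ := D + ↑w*↑x*Complex.I with hEdef
  have hEre : E.re = κ*β := by simp [hEdef, hDdef]
  have hE0 : E ≠ 0 := by
    intro h; rw [h] at hEre; simp at hEre
    rcases hEre with h|h <;> linarith
  have hβ0 : (↑β:ℂ) ≠ 0 := by exact_mod_cast hβ.ne'
  have hden1 : (↑κ - ↑((1-w)*x/β)*Complex.I : ℂ) ≠ 0 := by
    intro h
    have := congrArg Complex.re h
    simp at this
    nlinarith
  have hden2 : (↑κ - ↑(x/β)*Complex.I : ℂ) ≠ 0 := by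
    intro h
    have := congrArg Complex.re h
    simp at this
    nlinarith
  set A : ℂ := ↑κ / (↑κ - ↑(x/β)*Complex.I) with hAdef
  have hAalt : A = ↑κ*↑β / D := by
    rw [hAdef, hDdef]
    rw [div_eq_div_iff hden2 hD0]
    push_cast
    field_simp
    ring
  have e1 : (↑κ - ↑((1-w)*x/β)*Complex.I : ℂ) = E / ↑β := by
    rw [hEdef, hDdef, eq_div_iff hβ0]
    push_cast
    field_simp
    ring
  have e2 : (1 - ↑w*v) = E / D := by
    rw [hvdef, hEdef, eq_div_iff hD0]
    field_simp
    ring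
  have hquot : (↑κ : ℂ)/(↑κ - ↑((1-w)*x/β)*Complex.I) = A * (1 - ↑w*v)⁻¹ := by
    rw [e1, e2, hAalt]
    field_simp
  -- positivity of real parts
  have hAre : 0 < A.re := by
    rw [hAalt, div_eq_mul_inv]
    have : ((↑κ*↑β:ℂ) * D⁻¹).re = (κ*β) * (D⁻¹).re := by
      rw [show ((↑κ*↑β:ℂ)) = ((κ*β:ℝ):ℂ) by push_cast; ring, Complex.re_ofReal_mul]
    rw [this]
    have : (D⁻¹).re = D.re / Complex.normSq D := Complex.inv_re D
    rw [this, hDre]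
    have : 0 < Complex.normSq D := Complex.normSq_pos.mpr hD0
    positivity
  have hBre : 0 < ((1 - ↑w*v)⁻¹).re := by
    rw [Complex.inv_re]
    have : 0 < Complex.normSq (1 - ↑w*v) := Complex.normSq_pos.mpr h1wv
    positivity
  have hA0 : A ≠ 0 := by
    intro h; rw [h] at hAre; simp at hAre
  have hB0 : (1 - ↑w*v)⁻¹ ≠ 0 := inv_ne_zero h1wv
  have hargA : |A.arg| < Real.pi/2 := Complex.abs_arg_lt_pi_div_two_iff.mpr (Or.inl hAre)
  have hargB : |((1 - ↑w*v)⁻¹).arg| < Real.pi/2 :=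
    Complex.abs_arg_lt_pi_div_two_iff.mpr (Or.inl hBre)
  have hargwv : |(1 - ↑w*v).arg| < Real.pi/2 := Complex.abs_arg_lt_pi_div_two_iff.mpr (Or.inl hvre)
  have hmem : A.arg + ((1 - ↑w*v)⁻¹).arg ∈ Set.Ioc (-Real.pi) Real.pi := by
    rcases abs_lt.mp hargA with ⟨h1, h2⟩
    rcases abs_lt.mp hargB with ⟨h3, h4⟩
    constructor <;> [linarith; linarith]
  have hlm := Complex.log_mul hA0 hB0 hmem
  have hli : Complex.log (1 - ↑w*v)⁻¹ = -Complex.log (1 - ↑w*v) := by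
    refine Complex.log_inv _ ?_
    rcases abs_lt.mp hargwv with ⟨h1, h2⟩
    have := Real.pi_pos
    intro h; rw [h] at h2; linarith
  unfold gammaExponent
  rw [hquot, hlm, hli, ← hAdef]
  ring

lemma aux_alg (n : ℕ) (β : ℝ) (hβ0 : (β:ℂ) ≠ 0) (hn0 : ((n:ℂ)+1) ≠ 0) (v X Y Z : ℂ)
    (key : X*Y = 1) :
    v^(n+1)/((n:ℂ)+1) * X * ((Y-Z)/(((n:ℂ)+1)*↑β))
      = (1/↑β)*(v^(n+1)/((n:ℂ)+1)^2 - v^(n+1)*(X*Z)/((n:ℂ)+1)^2) := by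
  field_simp
  linear_combination v^(n+1) * key

lemma aux_term (β s t : ℝ) (hβ : 0 < β) (v : ℂ) (n : ℕ) :
    (∫ u in s..t, (↑(Real.exp (-β*(t-u))) * v)^(n+1)/((n:ℂ)+1))
      = (1/↑β) * (v^(n+1)/((n:ℂ)+1)^2
          - (v*↑(Real.exp (-β*(t-s))))^(n+1)/((n:ℂ)+1)^2) := by
  have hβ0 : (↑β:ℂ) ≠ 0 := by exact_mod_cast hβ.ne'
  have hn0 : ((n:ℂ)+1) ≠ 0 := Nat.cast_add_one_ne_zero n
  have hc : ((n:ℂ)+1)*↑β ≠ 0 := mul_ne_zero hn0 hβ0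
  have he : ∀ u : ℝ, ((Real.exp (-β*(t-u)) : ℝ) : ℂ)^(n+1)
      = Complex.exp (-(((n:ℂ)+1)*↑β)*↑t) * Complex.exp ((((n:ℂ)+1)*↑β)*↑u) := by
    intro u
    rw [← Complex.ofReal_pow, ← Real.exp_nat_mul, Complex.ofReal_exp, ← Complex.exp_add]
    congr 1
    push_cast
    ring
  have hptwise : ∀ u : ℝ, (↑(Real.exp (-β*(t-u))) * v)^(n+1)/((n:ℂ)+1)
      = (v^(n+1)/((n:ℂ)+1) * Complex.exp (-(((n:ℂ)+1)*↑β)*↑t))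
          * Complex.exp ((((n:ℂ)+1)*↑β)*↑u) := by
    intro u
    rw [mul_pow, he]
    ring
  simp_rw [hptwise]
  rw [intervalIntegral.integral_const_mul, integral_exp_mul_complex hc]
  have hee : Complex.exp (-(((n:ℂ)+1)*↑β)*↑t) * Complex.exp ((((n:ℂ)+1)*↑β)*↑t) = 1 := by
    rw [← Complex.exp_add]
    ring_nf
    exact Complex.exp_zero
  rw [mul_pow v, he s]
  exact aux_alg n β hβ0 hn0 v _ _ _ hee

/-- for `κ, α, β > 0`, `s ≤ t` and real `x`,
`∫_s^t ψ_γ((1 - e^{-β(t-u)})x/β) du = (t-s)ψ_γ(x/β) + (α/β)(Li₂(v) - Li₂(v e^{-β(t-s)}))`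
where `v = -ix/(κβ - ix)`. -/
theorem gammaExponent_integral_dilog (κ α β : ℝ) (hκ : 0 < κ) (hα : 0 < α)
    (hβ : 0 < β) (s t : ℝ) (hst : s ≤ t) (x : ℝ) :
    (∫ u in s..t, gammaExponent κ α ((1 - Real.exp (-β * (t - u))) * x / β))
      = (t - s) * gammaExponent κ α (x / β)
        + α / β *
          (dilog (-(x * Complex.I) / (κ * β - x * Complex.I))
            - dilog (-(x * Complex.I) / (κ * β - x * Complex.I)
                * Real.exp (-β * (t - s)))) := by
  set v : ℂ := -(↑x * Complex.I) / (↑κ * ↑β - ↑x * Complex.I) with hvdef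
  have hv1 : ‖v‖ < 1 := aux_norm_v κ β x hκ hβ
  set r : ℝ := Real.exp (-β * (t - s)) with hrdef
  have hβ0 : (↑β:ℂ) ≠ 0 := by exact_mod_cast hβ.ne'
  have hcong : Set.EqOn (fun u => gammaExponent κ α ((1 - Real.exp (-β * (t - u))) * x / β))
      (fun u => gammaExponent κ α (x/β) - ↑α * Complex.log (1 - ↑(Real.exp (-β*(t-u))) * v))
      (Set.uIcc s t) := by
    intro u hu
    rw [Set.uIcc_of_le hst] at hu
    exact aux_key κ α β hκ hβ x _ (Real.exp_pos _) (Real.exp_le_one_iff.mpr (by nlinarith [hu.2]))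
  rw [intervalIntegral.integral_congr hcong]
  have hcont : ContinuousOn (fun u => Complex.log (1 - ↑(Real.exp (-β*(t-u))) * v))
      (Set.uIcc s t) := by
    intro u hu
    rw [Set.uIcc_of_le hst] at hu
    have hre := aux_re_pos hv1 (Real.exp (-β*(t-u))) (Real.exp_pos _).le
      (Real.exp_le_one_iff.mpr (by nlinarith [hu.2]))
    have hc1 : ContinuousAt (fun u : ℝ => (1:ℂ) - ↑(Real.exp (-β*(t-u))) * v) u := by fun_prop
    exact (hc1.clog (Complex.mem_slitPlane_iff.mpr (Or.inl hre))).continuousWithinAt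
  have hint : IntervalIntegrable (fun u => Complex.log (1 - ↑(Real.exp (-β*(t-u))) * v))
      volume s t := hcont.intervalIntegrable
  rw [intervalIntegral.integral_sub intervalIntegrable_const (hint.const_mul _),
    intervalIntegral.integral_const, intervalIntegral.integral_const_mul]
  have hmain : (∫ u in s..t, Complex.log (1 - ↑(Real.exp (-β*(t-u))) * v))
      = -(1/↑β) * (dilog v - dilog (v * ↑r)) := by
    have hcong2 : Set.EqOn (fun u => Complex.log (1 - ↑(Real.exp (-β*(t-u))) * v))
        (fun u => -∑' n : ℕ, (↑(Real.exp (-β*(t-u))) * v)^(n+1)/((n:ℂ)+1)) (Set.uIcc s t) := by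
      intro u hu
      rw [Set.uIcc_of_le hst] at hu
      have hz : ‖(↑(Real.exp (-β*(t-u))) : ℂ) * v‖ < 1 := by
        rw [norm_mul, Complex.norm_real, Real.norm_eq_abs, abs_of_pos (Real.exp_pos _)]
        have he1 : Real.exp (-β*(t-u)) ≤ 1 := Real.exp_le_one_iff.mpr (by nlinarith [hu.2])
        nlinarith [norm_nonneg v, Real.exp_pos (-β*(t-u))]
      have hts := (aux_hasSum hz).tsum_eq
      simp only
      rw [hts, neg_neg]
    rw [intervalIntegral.integral_congr hcong2, intervalIntegral.integral_neg]
    have hFint : ∀ n : ℕ, IntegrableOn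
        (fun u : ℝ => (↑(Real.exp (-β*(t-u))) * v)^(n+1)/((n:ℂ)+1)) (Set.Ioc s t) volume := by
      intro n
      apply Continuous.integrableOn_Ioc
      fun_prop
    have hbound : ∀ n : ℕ, ∀ u ∈ Set.Ioc s t,
        ‖(↑(Real.exp (-β*(t-u))) * v)^(n+1)/((n:ℂ)+1)‖ ≤ ‖v‖^(n+1) := by
      intro n u hu
      rw [norm_div, norm_pow]
      have h1 : ‖(↑(Real.exp (-β*(t-u))) : ℂ) * v‖ ≤ ‖v‖ := by
        rw [norm_mul, Complex.norm_real, Real.norm_eq_abs, abs_of_pos (Real.exp_pos _)]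
        have he1 : Real.exp (-β*(t-u)) ≤ 1 := Real.exp_le_one_iff.mpr (by nlinarith [hu.2])
        nlinarith [norm_nonneg v, Real.exp_pos (-β*(t-u))]
      have h2 : (1:ℝ) ≤ ‖((n:ℂ)+1)‖ := by
        rw [show ((n:ℂ)+1) = ((n+1:ℕ):ℂ) by push_cast; ring, Complex.norm_natCast]
        exact_mod_cast Nat.one_le_iff_ne_zero.mpr (Nat.succ_ne_zero n)
      calc ‖(↑(Real.exp (-β*(t-u))) : ℂ) * v‖^(n+1) / ‖((n:ℂ)+1)‖
          ≤ ‖v‖^(n+1) / 1 := by gcongr <;> first | exact norm_nonneg _ | exact h1 | exact h2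
        _ = ‖v‖^(n+1) := div_one _
    have hIb : ∀ n : ℕ, (∫ u in Set.Ioc s t, ‖(↑(Real.exp (-β*(t-u))) * v)^(n+1)/((n:ℂ)+1)‖)
        ≤ (t-s) * ‖v‖^(n+1) := by
      intro n
      have h := setIntegral_mono_on ((hFint n).norm)
        (integrableOn_const measure_Ioc_lt_top.ne) measurableSet_Ioc (hbound n)
      rw [setIntegral_const, Real.volume_real_Ioc, max_eq_left (sub_nonneg.mpr hst),
        smul_eq_mul] at h
      exact h
    have hgeo : Summable (fun n : ℕ => (t-s) * ‖v‖^(n+1)) := by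
      have h := (summable_geometric_of_lt_one (norm_nonneg v) hv1).mul_left ((t-s) * ‖v‖)
      refine h.congr fun n => ?_
      rw [pow_succ]
      ring
    have hsummable : Summable (fun n : ℕ =>
        ∫ u in Set.Ioc s t, ‖(↑(Real.exp (-β*(t-u))) * v)^(n+1)/((n:ℂ)+1)‖) :=
      Summable.of_nonneg_of_le (fun n => integral_nonneg fun u => norm_nonneg _) hIb hgeo
    have hswap := MeasureTheory.integral_tsum_of_summable_integral_norm
      (μ := volume.restrict (Set.Ioc s t)) hFint hsummable
    rw [intervalIntegral.integral_of_le hst, ← hswap]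
    have hterm' : ∀ n : ℕ, (∫ u in Set.Ioc s t, (↑(Real.exp (-β*(t-u))) * v)^(n+1)/((n:ℂ)+1))
        = (1/↑β) * (v^(n+1)/((n:ℂ)+1)^2 - (v*↑r)^(n+1)/((n:ℂ)+1)^2) := by
      intro n
      rw [← intervalIntegral.integral_of_le hst]
      exact aux_term β s t hβ v n
    rw [tsum_congr hterm', tsum_mul_left]
    have hvr : ‖v * ↑r‖ < 1 := by
      rw [norm_mul, Complex.norm_real, Real.norm_eq_abs, abs_of_pos (Real.exp_pos _)]
      nlinarith [norm_nonneg v, Real.exp_pos (-β*(t-s)),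
        Real.exp_le_one_iff.mpr (show -β*(t-s) ≤ 0 by nlinarith)]
    rw [Summable.tsum_sub (aux_summable hv1) (aux_summable hvr)]
    simp only [dilog]
    ring
  rw [hmain, Complex.real_smul]
  push_cast
  ring
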